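/- Let w_1, …, w_m be linearly independent linear forms in B with 𝔽_p-span W, let d_1, …, d_m be natural numbers, and let S be a system of line representatives for W. Then the product Δ(W) = ∏_{w∈S} w divides det M(w_1,…,w_m; d_1,…,d_m) in B. -/

import Mathlib

open MvPolynomial

/-- The linear form `Σ_i v_i X_i` in `B = (ZMod p)[X_1, …, X_m]` associated to a
coefficient vector `v : Fin m → ZMod p`. -/
noncomputable def linForm (p m : ℕ) (v : Fin m → ZMod p) :
    MvPolynomial (Fin m) (ZMod p) :=
  ∑ i : Fin m, MvPolynomial.C (v i) * MvPolynomial.X i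

/-- A system of line representatives for a subspace `W` of an `𝔽_p`-module:
a finite set of nonzero elements of `W` such that every nonzero element of `W`
is a scalar multiple of exactly one element of the set. -/
def IsLineReps {p : ℕ} {M : Type*} [AddCommGroup M] [Module (ZMod p) M]
    (W : Submodule (ZMod p) M) (S : Finset M) : Prop :=
  (∀ w ∈ S, w ∈ W ∧ w ≠ 0) ∧
    ∀ w ∈ W, w ≠ 0 → ∃! u, u ∈ S ∧ ∃ c : ZMod p, w = c • u

/-- `linForm` as a linear map. -/
noncomputable def linFormL (p m : ℕ) :
    (Fin m → ZMod p) →ₗ[ZMod p] MvPolynomial (Fin m) (ZMod p) where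
  toFun v := linForm p m v
  map_add' v w := by
    simp [linForm, map_add, add_mul, Finset.sum_add_distrib]
  map_smul' c v := by
    simp [linForm, smul_eq_C_mul, Finset.mul_sum, map_mul, mul_assoc]

lemma linForm_single (p m : ℕ) (i : Fin m) : linForm p m (Pi.single i 1) = X i := by
  classical
  rw [linForm, Finset.sum_eq_single i]
  · simp
  · intro b _ hb
    simp [Pi.single_eq_of_ne hb]
  · simp

lemma coeff_linForm (p m : ℕ) (t : Fin m → ZMod p) (i : Fin m) :
    coeff (Finsupp.single i 1) (linForm p m t) = t i := by
  classical
  rw [linForm, coeff_sum, Finset.sum_eq_single i]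
  · simp [coeff_C_mul, coeff_X]
  · intro b _ hb
    simp only [coeff_C_mul]
    rw [coeff_X' (R := ZMod p)]
    rw [if_neg (fun h => hb (by
      have := (Finsupp.single_left_injective (one_ne_zero)) h
      exact this))]
    ring
  · simp

lemma aeval_linForm (p m : ℕ) (G : Fin m → Fin m → ZMod p) (t : Fin m → ZMod p) :
    aeval (fun i => linForm p m (G i)) (linForm p m t)
      = linForm p m (∑ k, t k • G k) := by
  have hR : linForm p m (∑ k, t k • G k) = ∑ k, t k • linForm p m (G k) := by
    show linFormL p m (∑ k, t k • G k) = _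
    rw [map_sum]
    simp only [map_smul]
    rfl
  rw [hR, linForm, map_sum]
  refine Finset.sum_congr rfl fun k _ => ?_
  rw [map_mul, aeval_C, aeval_X]
  rw [smul_eq_C_mul]
  rfl

lemma sum_single_smul {p m : ℕ} (i : Fin m) (H : Fin m → Fin m → ZMod p) :
    ∑ k, (Pi.single i 1 : Fin m → ZMod p) k • H k = H i := by
  classical
  rw [Finset.sum_eq_single i]
  · simp
  · intro b _ hb; simp [Pi.single_eq_of_ne hb]
  · simp

lemma sum_smul_single {p m : ℕ} (t : Fin m → ZMod p) :
    ∑ k, t k • (Pi.single k 1 : Fin m → ZMod p) = t := by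
  classical
  funext i
  simp only [Finset.sum_apply, Pi.smul_apply, smul_eq_mul]
  rw [Finset.sum_eq_single i]
  · simp
  · intro b _ hb; simp [Pi.single_eq_of_ne (Ne.symm hb)]
  · simp

lemma exists_homs (p m : ℕ) [Fact p.Prime] (u : Fin m → ZMod p) (j0 : Fin m)
    (hu : u j0 ≠ 0) :
    ∃ φ ψ : MvPolynomial (Fin m) (ZMod p) →ₐ[ZMod p] MvPolynomial (Fin m) (ZMod p),
      (∀ a, φ (ψ a) = a) ∧ (∀ a, ψ (φ a) = a) ∧ φ (X j0) = linForm p m u ∧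
      ∀ t, ∃ s, ψ (linForm p m t) = linForm p m s := by
  classical
  set u' : Fin m → ZMod p := Function.update u j0 0 with hu'def
  have hu'j0 : u' j0 = 0 := Function.update_self _ _ _
  have hu'ne : ∀ k, k ≠ j0 → u' k = u k := fun k hk => Function.update_of_ne hk _ _
  set F : Fin m → Fin m → ZMod p := fun i => if i = j0 then u else Pi.single i 1 with hF
  set G : Fin m → Fin m → ZMod p :=
    fun i => if i = j0 then (u j0)⁻¹ • ((Pi.single j0 1 : Fin m → ZMod p) - u')
      else Pi.single i 1 with hG
  have hFj0 : F j0 = u := by simp [hF]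
  have hFne : ∀ i, i ≠ j0 → F i = Pi.single i 1 := fun i hi => by simp [hF, hi]
  have hGj0 : G j0 = (u j0)⁻¹ • ((Pi.single j0 1 : Fin m → ZMod p) - u') := by simp [hG]
  have hGne : ∀ i, i ≠ j0 → G i = Pi.single i 1 := fun i hi => by simp [hG, hi]
  have hsub : u - u' = u j0 • (Pi.single j0 1 : Fin m → ZMod p) := by
    funext k
    by_cases hk : k = j0
    · subst hk; simp [hu'j0]
    · simp [hu'ne k hk, Pi.single_eq_of_ne hk]
  have hsumF_u' : ∑ k, u' k • F k = u' := by
    have : ∀ k ∈ Finset.univ, u' k • F k = u' k • (Pi.single k 1 : Fin m → ZMod p) := by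
      intro k _
      by_cases hk : k = j0
      · subst hk; rw [hu'j0, zero_smul, zero_smul]
      · rw [hFne k hk]
    rw [Finset.sum_congr rfl this, sum_smul_single]
  have hGFj0 : ∑ k, G j0 k • F k = Pi.single j0 1 := by
    have step : ∀ k ∈ Finset.univ, G j0 k • F k =
        (u j0)⁻¹ • ((Pi.single j0 1 : Fin m → ZMod p) k • F k) - (u j0)⁻¹ • (u' k • F k) := by
      intro k _
      rw [hGj0]
      simp only [Pi.smul_apply, Pi.sub_apply, smul_eq_mul]
      rw [mul_sub, sub_smul, mul_smul, mul_smul]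
    rw [Finset.sum_congr rfl step, Finset.sum_sub_distrib, ← Finset.smul_sum, ← Finset.smul_sum,
      sum_single_smul, hsumF_u', hFj0, ← smul_sub, hsub, smul_smul, inv_mul_cancel₀ hu, one_smul]
  have hFGj0 : ∑ k, F j0 k • G k = Pi.single j0 1 := by
    rw [hFj0]
    have step : ∀ k ∈ Finset.univ, u k • G k
        = u' k • (Pi.single k 1 : Fin m → ZMod p)
          + (if k = j0 then ((Pi.single j0 1 : Fin m → ZMod p) - u') else 0) := by
      intro k _
      by_cases hk : k = j0
      · subst hk
        rw [if_pos rfl, hGj0, hu'j0, zero_smul, zero_add, smul_smul,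
          mul_inv_cancel₀ hu, one_smul]
      · rw [if_neg hk, hGne k hk, hu'ne k hk, add_zero]
    rw [Finset.sum_congr rfl step, Finset.sum_add_distrib, sum_smul_single,
      Finset.sum_ite_eq' Finset.univ j0]
    simp only [Finset.mem_univ, if_true]
    abel
  have hGF : ∀ i, ∑ k, G i k • F k = Pi.single i 1 := by
    intro i
    by_cases hi : i = j0
    · rw [hi]; exact hGFj0
    · rw [Finset.sum_congr rfl (fun k _ => by rw [hGne i hi]), sum_single_smul, hFne i hi]
  have hFG : ∀ i, ∑ k, F i k • G k = Pi.single i 1 := by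
    intro i
    by_cases hi : i = j0
    · rw [hi]; exact hFGj0
    · rw [hFne i hi, sum_single_smul, hGne i hi]
  refine ⟨aeval (fun i => linForm p m (F i)), aeval (fun i => linForm p m (G i)),
    ?_, ?_, ?_, fun t => ⟨_, aeval_linForm p m G t⟩⟩
  · have : (aeval (fun i => linForm p m (F i))).comp (aeval (fun i => linForm p m (G i)))
        = AlgHom.id (ZMod p) _ := by
      apply algHom_ext
      intro i
      simp only [AlgHom.comp_apply, aeval_X, AlgHom.id_apply]
      rw [aeval_linForm, hGF, linForm_single]
    exact fun a => congrArg (fun f => f a) (congrArg DFunLike.coe this)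
  · have : (aeval (fun i => linForm p m (G i))).comp (aeval (fun i => linForm p m (F i)))
        = AlgHom.id (ZMod p) _ := by
      apply algHom_ext
      intro i
      simp only [AlgHom.comp_apply, aeval_X, AlgHom.id_apply]
      rw [aeval_linForm, hFG, linForm_single]
    exact fun a => congrArg (fun f => f a) (congrArg DFunLike.coe this)
  · rw [aeval_X, hFj0]

lemma prime_X_fin (p k : ℕ) [Fact p.Prime] (j : Fin (k + 1)) :
    Prime (X j : MvPolynomial (Fin (k + 1)) (ZMod p)) := by
  have h0 : Prime (X (0 : Fin (k + 1)) : MvPolynomial (Fin (k + 1)) (ZMod p)) := by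
    rw [← MulEquiv.prime_iff (finSuccEquiv (ZMod p) k).toMulEquiv]
    have : (finSuccEquiv (ZMod p) k).toMulEquiv (X 0) = Polynomial.X := finSuccEquiv_X_zero
    rw [this]
    exact Polynomial.prime_X
  rw [← MulEquiv.prime_iff (renameEquiv (ZMod p) (Equiv.swap (0 : Fin (k + 1)) j)).toMulEquiv] at h0
  have : (renameEquiv (ZMod p) (Equiv.swap (0 : Fin (k + 1)) j)).toMulEquiv
      (X (0 : Fin (k+1)) : MvPolynomial (Fin (k+1)) (ZMod p)) = X j := by
    show renameEquiv (ZMod p) (Equiv.swap (0 : Fin (k + 1)) j) (X 0) = X j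
    rw [renameEquiv_apply, rename_X, Equiv.swap_apply_left]
  rwa [this] at h0

lemma prime_linForm (p m : ℕ) [Fact p.Prime] (u : Fin m → ZMod p) (hu : u ≠ 0) :
    Prime (linForm p m u) := by
  obtain ⟨j0, hj0⟩ : ∃ j, u j ≠ 0 := by
    by_contra h
    push_neg at h
    exact hu (funext h)
  obtain ⟨φ, ψ, hφψ, hψφ, hX, -⟩ := exists_homs p m u j0 hj0
  have hψu : ψ (linForm p m u) = X j0 := by rw [← hX, hψφ]
  have hXp : Prime (X j0 : MvPolynomial (Fin m) (ZMod p)) := by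
    obtain ⟨k, rfl⟩ := Nat.exists_eq_succ_of_ne_zero
      (show m ≠ 0 by rintro rfl; exact Fin.elim0 j0)
    exact prime_X_fin p k j0
  exact comap_prime ψ φ hφψ (hψu ▸ hXp)

lemma smul_of_dvd_linForm (p m : ℕ) [Fact p.Prime] (u1 u2 : Fin m → ZMod p)
    (h1 : u1 ≠ 0) (hd : linForm p m u1 ∣ linForm p m u2) :
    ∃ c : ZMod p, linForm p m u2 = c • linForm p m u1 := by
  classical
  obtain ⟨j0, hj0⟩ : ∃ j, u1 j ≠ 0 := by
    by_contra h
    push_neg at h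
    exact h1 (funext h)
  obtain ⟨φ, ψ, hφψ, hψφ, hX, hlin⟩ := exists_homs p m u1 j0 hj0
  have hψ1 : ψ (linForm p m u1) = X j0 := by rw [← hX, hψφ]
  obtain ⟨w, hw⟩ := hlin u2
  have hdvd : (X j0 : MvPolynomial (Fin m) (ZMod p)) ∣ linForm p m w := by
    rw [← hψ1, ← hw]
    exact map_dvd ψ hd
  obtain ⟨q, hq⟩ := hdvd
  have hwi : ∀ i, i ≠ j0 → w i = 0 := by
    intro i hi
    have := coeff_linForm p m w i
    rw [hq, mul_comm, coeff_mul_X'] at this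
    rw [← this, if_neg (by simp [Finsupp.mem_support_iff, Finsupp.single_apply, hi, Ne.symm hi])]
  have hwsingle : w = Pi.single j0 (w j0) := by
    funext k
    by_cases hk : k = j0
    · subst hk; simp
    · rw [hwi k hk, Pi.single_eq_of_ne hk]
  have hw' : w = w j0 • (Pi.single j0 1 : Fin m → ZMod p) := by
    rw [hwsingle]
    funext k
    by_cases hk : k = j0
    · subst hk; simp
    · simp [Pi.single_eq_of_ne hk]
  have hlinw : linForm p m w = w j0 • X j0 := by
    calc linForm p m w = linFormL p m (w j0 • (Pi.single j0 1 : Fin m → ZMod p)) := by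
          rw [← hw']; rfl
        _ = w j0 • linFormL p m (Pi.single j0 1) := map_smul _ _ _
        _ = w j0 • X j0 := by
          rw [show (linFormL p m) (Pi.single j0 1)
            = linForm p m (Pi.single j0 1) from rfl, linForm_single]
  refine ⟨w j0, ?_⟩
  rw [← hφψ (linForm p m u2), hw, hlinw, map_smul, hX]

lemma prod_dvd_of_prime_of_nonassoc {α : Type*} [CommMonoidWithZero α] [IsCancelMulZero α]
    (S : Finset α) :
    ∀ n : α, (∀ a ∈ S, Prime a) → (∀ a ∈ S, a ∣ n) →
      (∀ a ∈ S, ∀ b ∈ S, Associated a b → a = b) → (∏ a ∈ S, a) ∣ n := by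
  classical
  induction S using Finset.induction_on with
  | empty => simp
  | @insert a s ha IH =>
    intro n hp hd hu
    rw [Finset.prod_insert ha]
    obtain ⟨k, rfl⟩ := hd a (Finset.mem_insert_self a s)
    refine mul_dvd_mul_left a (IH k (fun b hb => hp b (Finset.mem_insert_of_mem hb))
      (fun b hb => ?_)
      (fun b hb c hc => hu b (Finset.mem_insert_of_mem hb) c (Finset.mem_insert_of_mem hc)))
    have hb' := hd b (Finset.mem_insert_of_mem hb)
    have hbp := hp b (Finset.mem_insert_of_mem hb)
    have hap := hp a (Finset.mem_insert_self a s)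
    refine (hbp.dvd_or_dvd hb').resolve_left fun hba => ?_
    have hba' : b = a := hu b (Finset.mem_insert_of_mem hb) a (Finset.mem_insert_self a s)
      (hbp.associated_of_dvd hap hba)
    exact absurd (hba' ▸ hb) ha


/-- if `w_1, …, w_m` are linearly independent linear forms with span `W`
and `S` is a system of line representatives for `W`, then `Δ(W) = ∏_{w ∈ S} w`
divides `det M(w_1,…,w_m; d_1,…,d_m)`. -/
theorem stmt1 (p m : ℕ) [Fact p.Prime] (hm : 1 ≤ m)
    (v : Fin m → Fin m → ZMod p)
    (hind : LinearIndependent (ZMod p) (fun j => linForm p m (v j)))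
    (d : Fin m → ℕ)
    (S : Finset (MvPolynomial (Fin m) (ZMod p)))
    (hS : IsLineReps (Submodule.span (ZMod p) (Set.range fun j => linForm p m (v j))) S) :
    (∏ w ∈ S, w) ∣
      Matrix.det (Matrix.of fun i j : Fin m => (linForm p m (v j)) ^ p ^ d i) := by
  classical
  set M : Matrix (Fin m) (Fin m) (MvPolynomial (Fin m) (ZMod p)) :=
    Matrix.of fun i j : Fin m => (linForm p m (v j)) ^ p ^ d i with hM
  -- every element of S divides the determinant
  have hdvd : ∀ w ∈ S, w ∣ M.det := by
    intro w hw
    obtain ⟨hwW, hw0⟩ := hS.1 w hw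
    rw [Submodule.mem_span_range_iff_exists_fun] at hwW
    obtain ⟨c, hc⟩ := hwW
    have hcj : ∃ j, c j ≠ 0 := by
      by_contra h
      push_neg at h
      apply hw0
      rw [← hc]
      simp [h]
    obtain ⟨j0, hj0⟩ := hcj
    have key : ∀ i, w ^ p ^ d i = ∑ j, (C (c j) : MvPolynomial (Fin m) (ZMod p)) • M i j := by
      intro i
      rw [← hc, sum_pow_char_pow]
      refine Finset.sum_congr rfl fun j _ => ?_
      rw [smul_pow]
      rw [ZMod.pow_card_pow]
      rw [smul_eq_mul, ← smul_eq_C_mul]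
      rfl
    have h1 : (Matrix.updateCol M j0 fun i => w ^ p ^ d i).det = (C (c j0) : MvPolynomial (Fin m) (ZMod p)) • M.det := by
      rw [show (fun i => w ^ p ^ d i)
          = fun i => ∑ j, (C (c j) : MvPolynomial (Fin m) (ZMod p)) • M i j from funext key]
      exact Matrix.det_updateCol_sum M j0 fun j => C (c j)
    have h2 : w ∣ (Matrix.updateCol M j0 fun i => w ^ p ^ d i).det := by
      have hcol : (fun i => w ^ p ^ d i) = w • fun i => w ^ (p ^ d i - 1) := by
        funext i
        have h1le : 1 ≤ p ^ d i := Nat.one_le_pow _ _ (Fact.out (p := p.Prime)).pos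
        simp only [Pi.smul_apply, smul_eq_mul]
        rw [← pow_succ']
        congr 1
        omega
      rw [hcol, Matrix.det_updateCol_smul]
      exact Dvd.intro _ rfl
    have hunit : (C ((c j0)⁻¹) : MvPolynomial (Fin m) (ZMod p)) * C (c j0) = 1 := by
      rw [← C_mul, inv_mul_cancel₀ hj0, C_1]
    have hMd : M.det = C ((c j0)⁻¹) * ((C (c j0) : MvPolynomial (Fin m) (ZMod p)) • M.det) := by
      rw [smul_eq_mul, ← mul_assoc, hunit, one_mul]
    rw [hMd, ← h1]
    exact h2.mul_left _
  -- every element of S is a nonzero linear form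
  have hrep : ∀ w ∈ S, ∃ u : Fin m → ZMod p, u ≠ 0 ∧ w = linForm p m u := by
    intro w hw
    obtain ⟨hwW, hw0⟩ := hS.1 w hw
    rw [Submodule.mem_span_range_iff_exists_fun] at hwW
    obtain ⟨c, hc⟩ := hwW
    have hlin : linForm p m (∑ j, c j • v j) = ∑ j, c j • linForm p m (v j) := by
      show linFormL p m _ = _
      rw [map_sum]
      simp only [map_smul]
      rfl
    refine ⟨∑ j, c j • v j, fun h => hw0 ?_, by rw [hlin, hc]⟩
    rw [← hc, ← hlin, h]
    show linFormL p m 0 = 0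
    exact map_zero _
  have hprime : ∀ w ∈ S, Prime w := by
    intro w hw
    obtain ⟨u, hu, rfl⟩ := hrep w hw
    exact prime_linForm p m u hu
  have hassoc : ∀ a ∈ S, ∀ b ∈ S, Associated a b → a = b := by
    intro a ha b hb hab
    obtain ⟨u1, hu1, ha'⟩ := hrep a ha
    obtain ⟨u2, hu2, hb'⟩ := hrep b hb
    have hd : a ∣ b := hab.dvd
    rw [ha', hb'] at hd
    obtain ⟨cc, hcc⟩ := smul_of_dvd_linForm p m u1 u2 hu1 hd
    have hbW := (hS.1 b hb).1
    have hb0 := (hS.1 b hb).2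
    obtain ⟨u, -, huniq⟩ := hS.2 b hbW hb0
    have h1 : a = u := huniq a ⟨ha, cc, by rw [ha', hb']; exact hcc⟩
    have h2 : b = u := huniq b ⟨hb, 1, (one_smul _ _).symm⟩
    rw [h1, h2]
  exact prod_dvd_of_prime_of_nonassoc S M.det hprime hdvd hassoc
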